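/- Let K ≥ 1 be an integer, L ≥ K a real number, and ψ_0, ψ_1, …, ψ_K ∈ ℝ. For i ∈ {1,…,K} set φ_i = (ψ_i − ψ_0)/L. Then for every q ∈ Δ_K, the supremum over all probability vectors (p(0), p(1), …, p(K)) with p(j) ≥ 0, Σ_{j=0}^K p(j) = 1, and p(i) ≤ 1/L for i ∈ {1,…,K}, of Σ_{i=1}^K p(i)·( L·q(i) − ψ_i ) − p(0)·ψ_0, equals −ψ_0 + Σ_{i=1}^K ( q(i) − φ_i )^+. Consequently, inf_{q∈Δ_K} of this supremum equals −ψ_0 + Σ_{i=1}^K (−φ_i)^+ + ( 1 − Σ_{i=1}^K (φ_i)^+ )^+, and q ∈ Δ_K attains this infimum if and only if q minimizes q ↦ Σ_{i=1}^K ( q(i) − φ_i )^+ over Δ_K. -/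

import Mathlib

/-- For a fixed `q ∈ Δ_K`, the set of values `Σ_i p(i) (L q(i) - ψ_i) - p(0) ψ_0`
over capped probability vectors `(p(0), p(1), …, p(K))` with `p(i) ≤ 1/L` for
`i ∈ {1,…,K}`. -/
def supSet (K : ℕ) (L : ℝ) (ψ0 : ℝ) (ψ : Fin K → ℝ) (q : Fin K → ℝ) : Set ℝ :=
  {r : ℝ | ∃ p0 : ℝ, ∃ p : Fin K → ℝ,
    0 ≤ p0 ∧ (∀ i, 0 ≤ p i) ∧ p0 + ∑ i, p i = 1 ∧ (∀ i, p i ≤ 1 / L) ∧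
    r = (∑ i, p i * (L * q i - ψ i)) - p0 * ψ0}

open Finset


lemma aux_lower {K : ℕ} (φ q : Fin K → ℝ) (hq0 : ∀ i, 0 ≤ q i)
    (hq1 : ∑ i, q i = 1) :
    (∑ i, max (-φ i) 0) + max (1 - ∑ i, max (φ i) 0) 0 ≤ ∑ i, max (q i - φ i) 0 := by
  have h1 : ∑ i, max (-φ i) 0 ≤ ∑ i, max (q i - φ i) 0 := by
    apply Finset.sum_le_sum; intro i _
    exact max_le_max (by linarith [hq0 i]) le_rfl
  have h2 : (∑ i, max (-φ i) 0) + (1 - ∑ i, max (φ i) 0) ≤ ∑ i, max (q i - φ i) 0 := by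
    have hpt : ∀ i ∈ univ, max (-φ i) 0 - max (φ i) 0 + q i ≤ max (q i - φ i) 0 := by
      intro i _
      have h : max (-φ i) 0 - max (φ i) 0 = -φ i := by
        rcases le_total (φ i) 0 with h | h
        · rw [max_eq_left (by linarith), max_eq_right h]; ring
        · rw [max_eq_right (by linarith), max_eq_left h]; ring
      rw [h]
      have := le_max_left (q i - φ i) 0
      linarith
    have := Finset.sum_le_sum hpt
    rw [show (∑ i, (max (-φ i) 0 - max (φ i) 0 + q i))
        = (∑ i, max (-φ i) 0) - (∑ i, max (φ i) 0) + ∑ i, q i by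
      rw [Finset.sum_add_distrib, Finset.sum_sub_distrib]] at this
    linarith
  rcases le_total (1 - ∑ i, max (φ i) 0) 0 with h | h
  · rw [max_eq_right h]; linarith
  · rw [max_eq_left h]; linarith

lemma aux_attain {K : ℕ} (hK : 1 ≤ K) (φ : Fin K → ℝ) :
    ∃ q : Fin K → ℝ, (∀ i, 0 ≤ q i) ∧ ∑ i, q i = 1 ∧
      ∑ i, max (q i - φ i) 0
        = (∑ i, max (-φ i) 0) + max (1 - ∑ i, max (φ i) 0) 0 := by
  set B := ∑ i, max (φ i) 0 with hB
  rcases le_total 1 B with h1B | h1B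
  · -- case B ≥ 1
    have hB0 : 0 < B := lt_of_lt_of_le one_pos h1B
    refine ⟨fun i => max (φ i) 0 / B, fun i => by positivity, ?_, ?_⟩
    · rw [← Finset.sum_div, div_self (ne_of_gt hB0)]
    · rw [max_eq_right (by linarith), add_zero]
      apply Finset.sum_congr rfl
      intro i _
      show max (max (φ i) 0 / B - φ i) 0 = max (-φ i) 0
      rcases le_total (φ i) 0 with h | h
      · rw [max_eq_right h, zero_div, zero_sub]
      · have hd : φ i / B ≤ φ i := div_le_self h h1B
        rw [max_eq_left h, max_eq_right (by linarith), max_eq_right (by linarith)]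
  · -- case B ≤ 1
    have i0 : Fin K := ⟨0, hK⟩
    refine ⟨fun i => max (φ i) 0 + (if i = i0 then 1 - B else 0), ?_, ?_, ?_⟩
    · intro i
      have : (0:ℝ) ≤ if i = i0 then 1 - B else 0 := by
        split <;> simp <;> linarith
      positivity
    · rw [Finset.sum_add_distrib, Finset.sum_ite_eq' univ i0]
      simp [← hB]
    · rw [max_eq_left (by linarith)]
      have : ∀ i ∈ univ, max (max (φ i) 0 + (if i = i0 then 1 - B else 0) - φ i) 0
          = max (-φ i) 0 + (if i = i0 then 1 - B else 0) := by
        intro i _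
        have hr : (0:ℝ) ≤ if i = i0 then 1 - B else 0 := by
          split <;> simp <;> linarith
        have hm : max (φ i) 0 - φ i = max (-φ i) 0 := by
          rcases le_total (φ i) 0 with h | h
          · rw [max_eq_right h, max_eq_left (by linarith)]; ring
          · rw [max_eq_left h, max_eq_right (by linarith)]; ring
        rw [max_eq_left (by linarith [le_max_right (φ i) (0:ℝ), le_max_left (φ i) (0:ℝ)])]
        · linarith
      rw [Finset.sum_congr rfl this, Finset.sum_add_distrib, Finset.sum_ite_eq' univ i0]
      simp
lemma aux_sup (K : ℕ) (hK : 1 ≤ K) (L : ℝ) (hL : (K : ℝ) ≤ L)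
    (ψ0 : ℝ) (ψ : Fin K → ℝ) (φ : Fin K → ℝ) (hφ : ∀ i, φ i = (ψ i - ψ0) / L)
    (q : Fin K → ℝ) (hq0 : ∀ i, 0 ≤ q i) (hq1 : ∑ i, q i = 1) :
    sSup (supSet K L ψ0 ψ q) = -ψ0 + ∑ i, max (q i - φ i) 0 := by
  have hK1 : (1:ℝ) ≤ (K:ℝ) := by exact_mod_cast hK
  have hL0 : (0:ℝ) < L := lt_of_lt_of_le one_pos (le_trans hK1 hL)
  have hψ : ∀ i, ψ i = L * φ i + ψ0 := by
    intro i; rw [hφ i]; field_simp; ring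
  -- rewrite of objective value
  have hval : ∀ (p0 : ℝ) (p : Fin K → ℝ), p0 + ∑ i, p i = 1 →
      (∑ i, p i * (L * q i - ψ i)) - p0 * ψ0
        = -ψ0 + ∑ i, p i * (L * (q i - φ i)) := by
    intro p0 p hsum
    have h1 : ∑ i, p i * (L * q i - ψ i)
        = (∑ i, p i * (L * (q i - φ i))) - (∑ i, p i) * ψ0 := by
      rw [Finset.sum_mul, ← Finset.sum_sub_distrib]
      apply Finset.sum_congr rfl
      intro i _
      rw [hψ i]; ring
    rw [h1]
    have h2 : ∑ i, p i = 1 - p0 := by linarith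
    rw [h2]; ring
  -- upper bound on every element
  have hub : ∀ r ∈ supSet K L ψ0 ψ q, r ≤ -ψ0 + ∑ i, max (q i - φ i) 0 := by
    rintro r ⟨p0, p, hp0, hp, hsum, hcap, rfl⟩
    rw [hval p0 p hsum]
    have : ∀ i ∈ univ, p i * (L * (q i - φ i)) ≤ max (q i - φ i) 0 := by
      intro i _
      rcases le_total (q i - φ i) 0 with h | h
      · have : p i * (L * (q i - φ i)) ≤ 0 :=
          mul_nonpos_of_nonneg_of_nonpos (hp i) (mul_nonpos_of_nonneg_of_nonpos hL0.le h)
        exact le_trans this (le_max_right _ _)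
      · have h1 : p i * (L * (q i - φ i)) ≤ (1/L) * (L * (q i - φ i)) :=
          mul_le_mul_of_nonneg_right (hcap i) (mul_nonneg hL0.le h)
        have h2 : (1/L) * (L * (q i - φ i)) = q i - φ i := by field_simp
        rw [h2] at h1
        exact le_trans h1 (le_max_left _ _)
    linarith [Finset.sum_le_sum this]
  -- the maximizing p
  have hmem : (-ψ0 + ∑ i, max (q i - φ i) 0) ∈ supSet K L ψ0 ψ q := by
    set p : Fin K → ℝ := fun i => if 0 < q i - φ i then 1/L else 0 with hp
    have hpn : ∀ i, 0 ≤ p i := by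
      intro i; rw [hp]; dsimp only; split
      · positivity
      · exact le_rfl
    have hpc : ∀ i, p i ≤ 1/L := by
      intro i; rw [hp]; dsimp only; split
      · exact le_rfl
      · positivity
    have hps : ∑ i, p i ≤ 1 := by
      calc ∑ i, p i ≤ ∑ _i : Fin K, 1/L := Finset.sum_le_sum (fun i _ => hpc i)
        _ = K * (1/L) := by rw [Finset.sum_const, card_univ, Fintype.card_fin]; ring
        _ ≤ 1 := by rw [mul_one_div, div_le_one hL0]; exact hL
    refine ⟨1 - ∑ i, p i, p, by linarith, hpn, by ring, hpc, ?_⟩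
    rw [hval (1 - ∑ i, p i) p (by ring)]
    congr 1
    apply Finset.sum_congr rfl
    intro i _
    rw [hp]; dsimp only
    rcases lt_or_ge 0 (q i - φ i) with h | h
    · rw [if_pos h, max_eq_left h.le]; field_simp
    · rw [if_neg (not_lt.mpr h), max_eq_right h, zero_mul]
  exact le_antisymm (csSup_le ⟨_, hmem⟩ hub) (le_csSup ⟨_, hub⟩ hmem)

theorem stmt13 (K : ℕ) (hK : 1 ≤ K) (L : ℝ) (hL : (K : ℝ) ≤ L)
    (ψ0 : ℝ) (ψ : Fin K → ℝ) (φ : Fin K → ℝ) (hφ : ∀ i, φ i = (ψ i - ψ0) / L) :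
    (∀ q : Fin K → ℝ, (∀ i, 0 ≤ q i) → ∑ i, q i = 1 →
      sSup (supSet K L ψ0 ψ q) = -ψ0 + ∑ i, max (q i - φ i) 0) ∧
    sInf {r : ℝ | ∃ q : Fin K → ℝ,
        (∀ i, 0 ≤ q i) ∧ ∑ i, q i = 1 ∧ r = sSup (supSet K L ψ0 ψ q)}
      = -ψ0 + (∑ i, max (-φ i) 0) + max (1 - ∑ i, max (φ i) 0) 0 ∧
    (∀ q : Fin K → ℝ, (∀ i, 0 ≤ q i) → ∑ i, q i = 1 →
      (sSup (supSet K L ψ0 ψ q)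
          = -ψ0 + (∑ i, max (-φ i) 0) + max (1 - ∑ i, max (φ i) 0) 0
        ↔ ∀ q' : Fin K → ℝ, (∀ i, 0 ≤ q' i) → ∑ i, q' i = 1 →
            ∑ i, max (q i - φ i) 0 ≤ ∑ i, max (q' i - φ i) 0)) := by
  have hsup := aux_sup K hK L hL ψ0 ψ φ hφ
  set M : ℝ := (∑ i, max (-φ i) 0) + max (1 - ∑ i, max (φ i) 0) 0 with hM
  obtain ⟨qs, hqs0, hqs1, hqsM⟩ := aux_attain hK φ
  refine ⟨hsup, ?_, ?_⟩
  · -- the infimum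
    set T : Set ℝ := {r : ℝ | ∃ q : Fin K → ℝ,
        (∀ i, 0 ≤ q i) ∧ ∑ i, q i = 1 ∧ r = sSup (supSet K L ψ0 ψ q)} with hT
    have hmem : -ψ0 + M ∈ T := by
      exact ⟨qs, hqs0, hqs1, by rw [hsup qs hqs0 hqs1, hqsM]⟩
    have hlb : ∀ r ∈ T, -ψ0 + M ≤ r := by
      rintro r ⟨q, hq0, hq1, rfl⟩
      rw [hsup q hq0 hq1]
      have := aux_lower φ q hq0 hq1
      rw [hM]; linarith
    have : sInf T = -ψ0 + M := le_antisymm (csInf_le ⟨_, hlb⟩ hmem) (le_csInf ⟨_, hmem⟩ hlb)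
    rw [hT] at this
    rw [this, hM]; ring
  · -- optimality characterization
    intro q hq0 hq1
    rw [hsup q hq0 hq1]
    have hMeq : -ψ0 + (∑ i, max (-φ i) 0) + max (1 - ∑ i, max (φ i) 0) 0 = -ψ0 + M := by
      rw [hM]; ring
    rw [hMeq]
    constructor
    · intro h q' hq'0 hq'1
      have hq : ∑ i, max (q i - φ i) 0 = M := by linarith
      rw [hq, hM]
      exact aux_lower φ q' hq'0 hq'1
    · intro h
      have h1 := h qs hqs0 hqs1
      rw [hqsM, ← hM] at h1
      have h2 := aux_lower φ q hq0 hq1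
      rw [← hM] at h2
      have : ∑ i, max (q i - φ i) 0 = M := le_antisymm h1 h2
      rw [this]
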